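/- A feasible path departure vector h* is a dynamic user equilibrium (i.e., for every O-D pair (i,j) and every path p connecting (i,j), h*_p(t) > 0 implies Ψ_p(t,h*) = v_ij(h*) for almost every t) if and only if h* solves the variational inequality: for all feasible h, Σ_p ∫ Ψ_p(t,h*)(h_p(t) − h*_p(t)) dt ≥ 0. -/

import Mathlib

open MeasureTheory Set

section Aux

variable {α : Type*} [MeasurableSpace α] {μ : Measure α}

/-- Product of two `L²` real functions is integrable. -/
lemma aux_mul_integrable {f g : α → ℝ} (hf : MemLp f 2 μ) (hg : MemLp g 2 μ) :
    Integrable (fun t => f t * g t) μ := by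
  have h1 := hf.integrable_sq
  have h2 := hg.integrable_sq
  have hI : Integrable (fun t => (f t ^ 2 + g t ^ 2) / 2) μ := (h1.add h2).div_const 2
  refine hI.mono' (hf.1.mul hg.1) (Filter.Eventually.of_forall fun t => ?_)
  have h3 := two_mul_le_add_sq (|f t|) (|g t|)
  rw [sq_abs, sq_abs] at h3
  rw [Real.norm_eq_abs, abs_mul]
  nlinarith [abs_nonneg (f t), abs_nonneg (g t)]

/-- The set where a function is within `ε` of its essential infimum has positive measure. -/
lemma aux_essInf_set_pos [IsFiniteMeasure μ] (hμ0 : μ ≠ 0) {f : α → ℝ} {ε : ℝ} (hε : 0 < ε) :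
    μ {t | f t < essInf f μ + ε} ≠ 0 := by
  intro h0
  -- There is `n` with `μ {f ≤ n} ≠ 0`.
  obtain ⟨n, hn⟩ : ∃ n : ℕ, μ {t | f t ≤ (n : ℝ)} ≠ 0 := by
    by_contra hall
    push_neg at hall
    have : μ (⋃ n : ℕ, {t | f t ≤ (n : ℝ)}) = 0 := by
      rw [measure_iUnion_null_iff]; exact fun n => hall n
    have huniv : (⋃ n : ℕ, {t | f t ≤ (n : ℝ)}) = Set.univ := by
      ext t; simp only [Set.mem_iUnion, Set.mem_setOf_eq, Set.mem_univ, iff_true]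
      exact exists_nat_ge (f t)
    rw [huniv] at this
    exact hμ0 (Measure.measure_univ_eq_zero.mp this)
  have hbdd : BddAbove {a : ℝ | μ {x | f x < a} = 0} := by
    refine ⟨(n : ℝ) + 1, fun a ha => ?_⟩
    by_contra hlt
    push_neg at hlt
    have hsub : {t | f t ≤ (n : ℝ)} ⊆ {x | f x < a} := by
      intro t htm
      simp only [Set.mem_setOf_eq] at htm ⊢
      linarith
    exact hn (measure_mono_null hsub ha)
  have hmem : essInf f μ + ε ∈ {a : ℝ | μ {x | f x < a} = 0} := h0
  have := le_csSup hbdd hmem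
  rw [← essInf_eq_sSup] at this
  linarith

end Aux

/-- A feasible path departure vector `hstar` is a dynamic user equilibrium iff it solves the
variational inequality. -/
theorem stmt0
    {ι W : Type*} [Fintype ι] [Fintype W] [DecidableEq W]
    (od : ι → W) (hod : ∀ w, ∃ p, od p = w)
    (t₀ t_f : ℝ) (ht : t₀ < t_f)
    (Q : W → ℝ) (hQ : ∀ w, 0 < Q w)
    (μ : Measure ℝ) (hμ : μ = volume.restrict (Icc t₀ t_f))
    (Λ : Set (ι → ℝ → ℝ))
    (hΛ : Λ = {h : ι → ℝ → ℝ |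
      (∀ p, MemLp (h p) 2 μ) ∧ (∀ p, 0 ≤ᵐ[μ] h p) ∧
      (∀ w, ∑ p ∈ Finset.univ.filter (fun p => od p = w), ∫ t, h p t ∂μ = Q w)})
    (Ψ : (ι → ℝ → ℝ) → ι → ℝ → ℝ)
    (hΨmeas : ∀ h ∈ Λ, ∀ p, Measurable (Ψ h p))
    (hΨpos : ∀ h ∈ Λ, ∀ p, ∃ c > 0, ∀ᵐ t ∂μ, c ≤ Ψ h p t)
    (hΨL2 : ∀ h ∈ Λ, ∀ p, MemLp (Ψ h p) 2 μ)
    (hstar : ι → ℝ → ℝ) (hmem : hstar ∈ Λ)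
    (v : W → ℝ)
    (hv : ∀ w, v w = ⨅ p : {p : ι // od p = w}, essInf (Ψ hstar p.1) μ) :
    (∀ p, ∀ᵐ t ∂μ, 0 < hstar p t → Ψ hstar p t = v (od p)) ↔
      (∀ h ∈ Λ, 0 ≤ ∑ p : ι, ∫ t, Ψ hstar p t * (h p t - hstar p t) ∂μ) := by
  classical
  -- basic measure facts
  have hfin : IsFiniteMeasure μ := by
    constructor
    rw [hμ, Measure.restrict_apply_univ]
    exact measure_Icc_lt_top
  have hμ0 : μ ≠ 0 := by
    intro h0
    have : μ (Set.univ) = 0 := by rw [h0]; rfl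
    rw [hμ, Measure.restrict_apply_univ, Real.volume_Icc] at this
    rw [ENNReal.ofReal_eq_zero] at this
    linarith
  obtain ⟨hsL2, hspos, hssum⟩ : (∀ p, MemLp (hstar p) 2 μ) ∧ (∀ p, 0 ≤ᵐ[μ] hstar p) ∧
      (∀ w, ∑ p ∈ Finset.univ.filter (fun p => od p = w), ∫ t, hstar p t ∂μ = Q w) := by
    rw [hΛ] at hmem; exact hmem
  have hgmeas : ∀ p, Measurable (Ψ hstar p) := hΨmeas hstar hmem
  have hgL2 : ∀ p, MemLp (Ψ hstar p) 2 μ := hΨL2 hstar hmem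
  have hbdd : ∀ p, Filter.IsBoundedUnder (· ≥ ·) (ae μ) (Ψ hstar p) := by
    intro p
    obtain ⟨c, _, hc⟩ := hΨpos hstar hmem p
    exact ⟨c, hc⟩
  have hinf_ae : ∀ p, ∀ᵐ t ∂μ, essInf (Ψ hstar p) μ ≤ Ψ hstar p t :=
    fun p => ae_essInf_le (hbdd p)
  have hv_le : ∀ p, v (od p) ≤ essInf (Ψ hstar p) μ := by
    intro p
    rw [hv (od p)]
    exact ciInf_le (Finite.bddBelow_range _) (⟨p, rfl⟩ : {q : ι // od q = od p})
  have hv_ae : ∀ p, ∀ᵐ t ∂μ, v (od p) ≤ Ψ hstar p t := by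
    intro p
    filter_upwards [hinf_ae p] with t h1
    exact le_trans (hv_le p) h1
  constructor
  · -- equilibrium → VI
    intro H h hh
    obtain ⟨hL2, hpos, hsum⟩ : (∀ p, MemLp (h p) 2 μ) ∧ (∀ p, 0 ≤ᵐ[μ] h p) ∧
        (∀ w, ∑ p ∈ Finset.univ.filter (fun p => od p = w), ∫ t, h p t ∂μ = Q w) := by
      rw [hΛ] at hh; exact hh
    have key : ∀ p, v (od p) * (∫ t, h p t ∂μ - ∫ t, hstar p t ∂μ) ≤
        ∫ t, Ψ hstar p t * (h p t - hstar p t) ∂μ := by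
      intro p
      have int1 : Integrable (fun t => Ψ hstar p t * h p t) μ :=
        aux_mul_integrable (hgL2 p) (hL2 p)
      have int2 : Integrable (fun t => Ψ hstar p t * hstar p t) μ :=
        aux_mul_integrable (hgL2 p) (hsL2 p)
      have e1 : ∫ t, Ψ hstar p t * (h p t - hstar p t) ∂μ =
          (∫ t, Ψ hstar p t * h p t ∂μ) - ∫ t, Ψ hstar p t * hstar p t ∂μ := by
        rw [← integral_sub int1 int2]
        congr 1; funext t; ring
      have e2 : ∫ t, Ψ hstar p t * hstar p t ∂μ = v (od p) * ∫ t, hstar p t ∂μ := by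
        rw [← integral_const_mul]
        refine integral_congr_ae ?_
        filter_upwards [H p, hspos p] with t h1 h2
        simp only [Pi.zero_apply] at h2
        rcases eq_or_lt_of_le h2 with h3 | h3
        · rw [← h3]; ring
        · rw [h1 h3]
      have e3 : v (od p) * ∫ t, h p t ∂μ ≤ ∫ t, Ψ hstar p t * h p t ∂μ := by
        rw [← integral_const_mul]
        refine integral_mono_ae (((hL2 p).integrable one_le_two).const_mul _) int1 ?_
        filter_upwards [hv_ae p, hpos p] with t h1 h2
        exact mul_le_mul_of_nonneg_right h1 h2
      rw [e1, e2]
      linarith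
    have hzero : ∑ p : ι, v (od p) * (∫ t, h p t ∂μ - ∫ t, hstar p t ∂μ) = 0 := by
      rw [← Finset.sum_fiberwise Finset.univ od
        (fun p => v (od p) * (∫ t, h p t ∂μ - ∫ t, hstar p t ∂μ))]
      refine Finset.sum_eq_zero fun w _ => ?_
      have : ∀ p ∈ Finset.univ.filter (fun p => od p = w),
          v (od p) * (∫ t, h p t ∂μ - ∫ t, hstar p t ∂μ) =
          v w * (∫ t, h p t ∂μ - ∫ t, hstar p t ∂μ) := by
        intro p hp
        rw [Finset.mem_filter] at hp
        rw [hp.2]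
      rw [Finset.sum_congr rfl this, ← Finset.mul_sum, Finset.sum_sub_distrib,
        hsum w, hssum w, sub_self, mul_zero]
    calc (0 : ℝ) = ∑ p : ι, v (od p) * (∫ t, h p t ∂μ - ∫ t, hstar p t ∂μ) := hzero.symm
      _ ≤ ∑ p : ι, ∫ t, Ψ hstar p t * (h p t - hstar p t) ∂μ :=
        Finset.sum_le_sum fun p _ => key p
  · -- VI → equilibrium
    intro HVI p
    by_contra hcon
    -- measurable representative of `hstar p`
    set f : ℝ → ℝ := (hsL2 p).1.mk (hstar p) with hf_def
    have hfmeas : Measurable f := (hsL2 p).1.stronglyMeasurable_mk.measurable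
    have hfeq : hstar p =ᵐ[μ] f := (hsL2 p).1.ae_eq_mk
    have hfL2 : MemLp f 2 μ := (hsL2 p).ae_eq hfeq
    have hfint : Integrable f μ := ((hsL2 p).integrable one_le_two).congr hfeq
    -- find a bad set of positive measure
    have hA : ∃ n : ℕ, μ {t | 1 / ((n : ℝ) + 1) ≤ f t ∧
        v (od p) + 1 / ((n : ℝ) + 1) ≤ Ψ hstar p t} ≠ 0 := by
      by_contra hall
      push_neg at hall
      apply hcon
      have hU : μ (⋃ n : ℕ, {t | 1 / ((n : ℝ) + 1) ≤ f t ∧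
          v (od p) + 1 / ((n : ℝ) + 1) ≤ Ψ hstar p t}) = 0 :=
        measure_iUnion_null_iff.2 hall
      filter_upwards [hv_ae p, hfeq, measure_eq_zero_iff_ae_notMem.1 hU] with t h1 h2 h3 h4
      by_contra hne
      have h5 : v (od p) < Ψ hstar p t := lt_of_le_of_ne h1 (Ne.symm hne)
      have h6 : 0 < f t := by rw [← h2]; exact h4
      obtain ⟨n, hn⟩ := exists_nat_one_div_lt
        (lt_min h6 (sub_pos.2 h5) : 0 < min (f t) (Ψ hstar p t - v (od p)))
      refine h3 (Set.mem_iUnion.2 ⟨n, ?_, ?_⟩)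
      · exact le_of_lt (lt_of_lt_of_le hn (min_le_left _ _))
      · have := lt_of_lt_of_le hn (min_le_right _ _)
        linarith
    obtain ⟨n, hAn⟩ := hA
    set δ : ℝ := 1 / ((n : ℝ) + 1) with hδ_def
    have hδ : 0 < δ := by positivity
    set A : Set ℝ := {t | δ ≤ f t ∧ v (od p) + δ ≤ Ψ hstar p t} with hA_def
    have hAmeas : MeasurableSet A :=
      (measurableSet_le measurable_const hfmeas).inter
        (measurableSet_le measurable_const (hgmeas p))
    set m : ℝ := ∫ t in A, f t ∂μ with hm_def
    have hμA : 0 < (μ A).toReal := ENNReal.toReal_pos hAn (measure_ne_top μ A)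
    have hm_lb : δ * (μ A).toReal ≤ m := by
      have := setIntegral_mono_on
        ((integrableOn_const) : IntegrableOn (fun _ => δ) A μ)
        hfint.integrableOn hAmeas (fun t htA => htA.1)
      rwa [setIntegral_const, smul_eq_mul, mul_comm] at this
    have hmpos : 0 < m := lt_of_lt_of_le (mul_pos hδ hμA) hm_lb
    -- a cheapest path
    obtain ⟨q, hqod, hqinf⟩ : ∃ q, od q = od p ∧ essInf (Ψ hstar q) μ = v (od p) := by
      have : Nonempty {r : ι // od r = od p} := ⟨⟨p, rfl⟩⟩
      obtain ⟨q0, hq0⟩ := Finite.exists_min (fun r : {r : ι // od r = od p} =>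
        essInf (Ψ hstar r.1) μ)
      refine ⟨q0.1, q0.2, ?_⟩
      rw [hv]
      exact le_antisymm (le_ciInf hq0) (ciInf_le (Finite.bddBelow_range _) q0)
    set B : Set ℝ := {t | Ψ hstar q t < v (od p) + δ / 2} with hB_def
    have hBmeas : MeasurableSet B := measurableSet_lt (hgmeas q) measurable_const
    have hBpos : μ B ≠ 0 := by
      have := aux_essInf_set_pos (μ := μ) hμ0 (half_pos hδ) (f := Ψ hstar q)
      rwa [hqinf] at this
    set β : ℝ := (μ B).toReal with hβ_def
    have hβpos : 0 < β := ENNReal.toReal_pos hBpos (measure_ne_top μ B)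
    -- the competitor
    set h : ι → ℝ → ℝ := fun r t =>
      (if r = p then Set.indicator Aᶜ f t else hstar r t) +
      (if r = q then Set.indicator B (fun _ => m / β) t else 0) with hh_def
    have hconst_L2 : MemLp (Set.indicator B (fun _ => m / β)) 2 μ :=
      memLp_indicator_const 2 hBmeas _ (Or.inr (measure_ne_top μ B))
    have hL2' : ∀ r, MemLp (h r) 2 μ := by
      intro r
      have h1 : MemLp (fun t => if r = p then Set.indicator Aᶜ f t else hstar r t) 2 μ := by
        by_cases hr : r = p
        · simp only [hr, if_true]
          exact hfL2.indicator hAmeas.compl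
        · simp only [hr, if_false]
          exact hsL2 r
      have h2 : MemLp (fun t => if r = q then Set.indicator B (fun _ => m / β) t else 0) 2 μ := by
        by_cases hr : r = q
        · simp only [hr, if_true]
          exact hconst_L2
        · simp only [hr, if_false]
          exact MemLp.zero
      exact h1.add h2
    have hpos' : ∀ r, 0 ≤ᵐ[μ] h r := by
      intro r
      filter_upwards [hspos p, hfeq, hspos r] with t h1 h2 h3
      simp only [Pi.zero_apply] at h1 h3 ⊢
      apply add_nonneg
      · split_ifs with hr
        · exact Set.indicator_apply_nonneg (fun _ => h2 ▸ h1)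
        · exact h3
      · split_ifs with hr
        · exact Set.indicator_apply_nonneg (fun _ => div_nonneg hmpos.le hβpos.le)
        · exact le_refl 0
    have hIr : ∀ r, ∫ t, h r t ∂μ = (∫ t, hstar r t ∂μ) +
        ((if r = p then -m else 0) + (if r = q then m else 0)) := by
      intro r
      have hint1 : Integrable (fun t => if r = p then Set.indicator Aᶜ f t else hstar r t) μ := by
        by_cases hr : r = p
        · simp only [hr, if_true]
          exact (hfL2.indicator hAmeas.compl).integrable one_le_two
        · simp only [hr, if_false]
          exact (hsL2 r).integrable one_le_two
      have hint2 : Integrable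
          (fun t => if r = q then Set.indicator B (fun _ => m / β) t else 0) μ := by
        by_cases hr : r = q
        · simp only [hr, if_true]
          exact hconst_L2.integrable one_le_two
        · simp only [hr, if_false]
          exact integrable_zero _ _ _
      have e1 : ∫ t, (if r = p then Set.indicator Aᶜ f t else hstar r t) ∂μ =
          (∫ t, hstar r t ∂μ) + (if r = p then -m else 0) := by
        by_cases hr : r = p
        · simp only [hr, if_true]
          have e0 : (fun t => Set.indicator Aᶜ f t) = fun t => f t - Set.indicator A f t := by
            funext t
            rw [Set.indicator_compl A f]
            simp
          rw [e0, integral_sub hfint (hfint.indicator hAmeas),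
            integral_indicator hAmeas, ← hm_def,
            integral_congr_ae hfeq.symm, sub_eq_add_neg]
        · simp only [hr, if_false, add_zero]
      have e2 : ∫ t, (if r = q then Set.indicator B (fun _ => m / β) t else 0) ∂μ =
          (if r = q then m else 0) := by
        by_cases hr : r = q
        · simp only [hr, if_true]
          rw [integral_indicator_const _ hBmeas, smul_eq_mul, measureReal_def, ← hβ_def]
          field_simp
        · simp only [hr, if_false]
          exact integral_zero _ _
      rw [hh_def]
      rw [integral_add hint1 hint2, e1, e2, add_assoc]
    have hmem' : h ∈ Λ := by
      rw [hΛ]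
      refine ⟨hL2', hpos', fun w => ?_⟩
      rw [Finset.sum_congr rfl (fun r _ => hIr r), Finset.sum_add_distrib,
        Finset.sum_add_distrib, hssum w, Finset.sum_ite_eq' _ p (fun _ => -m),
        Finset.sum_ite_eq' _ q (fun _ => m)]
      simp only [Finset.mem_filter, Finset.mem_univ, true_and, hqod]
      split_ifs <;> ring
    have h0 := HVI h hmem'
    -- compute the VI sum
    have hterm : ∀ r, ∫ t, Ψ hstar r t * (h r t - hstar r t) ∂μ =
        (if r = p then -∫ t in A, Ψ hstar p t * f t ∂μ else 0) +
        (if r = q then (m / β) * ∫ t in B, Ψ hstar q t ∂μ else 0) := by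
      intro r
      have hXint : Integrable (fun t => Ψ hstar p t * Set.indicator A f t) μ := by
        have : (fun t => Ψ hstar p t * Set.indicator A f t) =
            Set.indicator A (fun t => Ψ hstar p t * f t) := by
          funext t
          rw [Set.indicator_mul_right]
        rw [this]
        exact (aux_mul_integrable (hgL2 p) hfL2).indicator hAmeas
      have hYint : Integrable (fun t => Ψ hstar q t * Set.indicator B (fun _ => m / β) t) μ := by
        have : (fun t => Ψ hstar q t * Set.indicator B (fun _ => m / β) t) =
            Set.indicator B (fun t => Ψ hstar q t * (m / β)) := by
          funext t
          rw [Set.indicator_mul_right]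
        rw [this]
        exact (((hgL2 q).integrable one_le_two).mul_const _).indicator hBmeas
      have heq : (fun t => Ψ hstar r t * (h r t - hstar r t)) =ᵐ[μ]
          (fun t => (if r = p then -(Ψ hstar p t * Set.indicator A f t) else 0) +
            (if r = q then Ψ hstar q t * Set.indicator B (fun _ => m / β) t else 0)) := by
        filter_upwards [hfeq] with t h2
        have hcompl : Set.indicator Aᶜ f t = f t - Set.indicator A f t := by
          rw [Set.indicator_compl A f]
          simp
        rw [hh_def]
        by_cases hr : r = p
        · subst hr
          by_cases hr' : r = q
          · subst hr'
            simp only [eq_self_iff_true, if_true]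
            rw [hcompl, h2]
            ring
          · simp only [eq_self_iff_true, if_true, if_neg hr']
            rw [hcompl, h2]
            ring
        · by_cases hr' : r = q
          · subst hr'
            simp only [eq_self_iff_true, if_true, if_neg hr]
            ring
          · simp only [if_neg hr, if_neg hr']
            ring
      rw [integral_congr_ae heq]
      have hint1 : Integrable (fun t => if r = p then -(Ψ hstar p t * Set.indicator A f t)
          else 0) μ := by
        by_cases hr : r = p
        · simp only [hr, if_true]; exact hXint.neg
        · simp only [hr, if_false]; exact integrable_zero _ _ _
      have hint2 : Integrable (fun t => if r = q then
          Ψ hstar q t * Set.indicator B (fun _ => m / β) t else 0) μ := by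
        by_cases hr : r = q
        · simp only [hr, if_true]; exact hYint
        · simp only [hr, if_false]; exact integrable_zero _ _ _
      rw [integral_add hint1 hint2]
      congr 1
      · by_cases hr : r = p
        · simp only [hr, if_true]
          rw [integral_neg]
          congr 1
          have : (fun t => Ψ hstar p t * Set.indicator A f t) =
              Set.indicator A (fun t => Ψ hstar p t * f t) := by
            funext t; rw [Set.indicator_mul_right]
          rw [this, integral_indicator hAmeas]
        · simp only [hr, if_false]
          exact integral_zero _ _
      · by_cases hr : r = q
        · simp only [hr, if_true]
          have : (fun t => Ψ hstar q t * Set.indicator B (fun _ => m / β) t) =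
              Set.indicator B (fun t => Ψ hstar q t * (m / β)) := by
            funext t; rw [Set.indicator_mul_right]
          rw [this, integral_indicator hBmeas]
          rw [show (fun t => Ψ hstar q t * (m / β)) = fun t => (m / β) * Ψ hstar q t by
            funext t; ring]
          rw [integral_const_mul]
        · simp only [hr, if_false]
          exact integral_zero _ _
    have hsum_eq : ∑ r : ι, ∫ t, Ψ hstar r t * (h r t - hstar r t) ∂μ =
        -(∫ t in A, Ψ hstar p t * f t ∂μ) + (m / β) * ∫ t in B, Ψ hstar q t ∂μ := by
      rw [Finset.sum_congr rfl (fun r _ => hterm r), Finset.sum_add_distrib,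
        Finset.sum_ite_eq' _ p (fun _ => -∫ t in A, Ψ hstar p t * f t ∂μ),
        Finset.sum_ite_eq' _ q (fun _ => (m / β) * ∫ t in B, Ψ hstar q t ∂μ)]
      simp
    rw [hsum_eq] at h0
    -- bound the two integrals
    have b1 : (v (od p) + δ) * m ≤ ∫ t in A, Ψ hstar p t * f t ∂μ := by
      have := setIntegral_mono_on
        ((hfint.const_mul (v (od p) + δ)).integrableOn :
          IntegrableOn (fun t => (v (od p) + δ) * f t) A μ)
        (aux_mul_integrable (hgL2 p) hfL2).integrableOn hAmeas
        (fun t htA => mul_le_mul_of_nonneg_right htA.2 (le_trans hδ.le htA.1))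
      rwa [integral_const_mul, ← hm_def] at this
    have b2 : ∫ t in B, Ψ hstar q t ∂μ ≤ (v (od p) + δ / 2) * β := by
      have := setIntegral_mono_on
        (((hgL2 q).integrable one_le_two).integrableOn : IntegrableOn (Ψ hstar q) B μ)
        ((integrableOn_const) :
          IntegrableOn (fun _ => v (od p) + δ / 2) B μ)
        hBmeas (fun t htB => le_of_lt htB)
      rwa [setIntegral_const, smul_eq_mul, measureReal_def, mul_comm ((μ B).toReal), ← hβ_def] at this
    have b2' : (m / β) * ∫ t in B, Ψ hstar q t ∂μ ≤ m * (v (od p) + δ / 2) := by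
      have := mul_le_mul_of_nonneg_left b2 (div_nonneg hmpos.le hβpos.le)
      calc (m / β) * ∫ t in B, Ψ hstar q t ∂μ ≤ (m / β) * ((v (od p) + δ / 2) * β) := this
        _ = m * (v (od p) + δ / 2) := by field_simp
    nlinarith [mul_pos hmpos hδ]
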